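/- Let n ∈ ℕ, let γ_1, …, γ_n ∈ ℂ satisfy Q·γ_k ≠ 1 for all k, and let β ∈ ℂ with β = 0 in case Q = 0. Then there exist a nonzero finite-dimensional ℂ-vector space V, a simple Q-deformed sl₂-current representation on V, and a nonzero vector v ∈ V such that X⁺_t v = 0 for all t ∈ ℕ, J_0 v = (n + β)·v, and for all t > 0: J_t v = p_t(γ_1,…,γ_n)·v if Q = 0, and J_t v = (p_t(γ_1,…,γ_n) + Q^{−t}·β)·v if Q ≠ 0. -/

import Mathlib

open Finset

namespace Stmt11Aux

variable {ι : Type} [DecidableEq ι] {m : ι → ℕ}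

abbrev V (m : ι → ℕ) := (∀ i, Fin (m i + 1)) → ℂ

/-- A "local" operator acting only on coordinate `i`. -/
def Lop (i : ι) (c : Fin (m i + 1) → ℂ) (σ : Fin (m i + 1) → Option (Fin (m i + 1))) :
    Module.End ℂ (V m) where
  toFun w J :=
    match σ (J i) with
    | none => 0
    | some k => c (J i) * w (Function.update J i k)
  map_add' x y := by
    funext J; rcases h : σ (J i) with _ | k <;> simp [h, mul_add]
  map_smul' r x := by
    funext J; rcases h : σ (J i) with _ | k <;> simp [h] <;> ring

lemma Lop_apply (i : ι) (c σ) (w : V m) (J) : Lop i c σ w J =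
    match σ (J i) with
    | none => 0
    | some k => c (J i) * w (Function.update J i k) := rfl

lemma Lop_mul_same_apply (i : ι) (c σ c' σ') (w : V m) (J) :
    (Lop i c σ * Lop i c' σ' : Module.End ℂ (V m)) w J =
    match σ (J i) with
    | none => 0
    | some k =>
      match σ' k with
      | none => 0
      | some k' => c (J i) * c' k * w (Function.update J i k') := by
  simp only [Module.End.mul_apply, Lop_apply]
  rcases h : σ (J i) with _ | k
  · simp
  · simp only [Function.update_self]
    rcases h' : σ' k with _ | k'
    · simp [h']
    · simp only [h', Function.update_idem]
      ring

lemma Lop_comm (i j : ι) (hij : i ≠ j) (c σ c' σ') :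
    (Lop i c σ * Lop j c' σ' : Module.End ℂ (V m)) = Lop j c' σ' * Lop i c σ := by
  refine LinearMap.ext fun w => funext fun J => ?_
  simp only [Module.End.mul_apply, Lop_apply, Function.update_of_ne hij,
    Function.update_of_ne (Ne.symm hij)]
  rcases h : σ (J i) with _ | k <;> rcases h' : σ' (J j) with _ | k' <;>
    simp only [h, h', mul_zero, zero_mul]
  rw [Function.update_comm hij]
  ring

def Eop (i : ι) : Module.End ℂ (V m) :=
  Lop i (fun k => ((k : ℕ) + 1 : ℂ) * ((m i : ℂ) - ((k : ℕ) : ℂ)))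
    (fun k => if h : (k : ℕ) < m i then some ⟨(k : ℕ) + 1, by omega⟩ else none)

def Fop (i : ι) : Module.End ℂ (V m) :=
  Lop i (fun _ => 1)
    (fun k => if h : 0 < (k : ℕ) then some ⟨(k : ℕ) - 1, by omega⟩ else none)

def Hop (i : ι) : Module.End ℂ (V m) :=
  Lop i (fun k => (m i : ℂ) - 2 * ((k : ℕ) : ℂ)) (fun k => some k)

lemma Hop_apply (i : ι) (w : V m) (J) :
    Hop i w J = ((m i : ℂ) - 2 * ((J i : ℕ) : ℂ)) * w J := by
  rw [Hop, Lop_apply]; simp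

lemma hHH (i j : ι) : Hop i * Hop j = (Hop j * Hop i : Module.End ℂ (V m)) := by
  rcases eq_or_ne i j with rfl | hij
  · rfl
  · exact Lop_comm i j hij _ _ _ _

lemma hEE (i j : ι) : Eop i * Eop j = (Eop j * Eop i : Module.End ℂ (V m)) := by
  rcases eq_or_ne i j with rfl | hij
  · rfl
  · exact Lop_comm i j hij _ _ _ _

lemma hFF (i j : ι) : Fop i * Fop j = (Fop j * Fop i : Module.End ℂ (V m)) := by
  rcases eq_or_ne i j with rfl | hij
  · rfl
  · exact Lop_comm i j hij _ _ _ _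

lemma hHE (i j : ι) : Hop i * Eop j - Eop j * Hop i
    = (if i = j then (2:ℂ) • Eop j else 0 : Module.End ℂ (V m)) := by
  rcases eq_or_ne i j with rfl | hij
  · rw [if_pos rfl]
    refine LinearMap.ext fun w => funext fun J => ?_
    rw [LinearMap.sub_apply, Pi.sub_apply]
    rw [Hop, Eop, Lop_mul_same_apply, Lop_mul_same_apply]
    simp only [LinearMap.smul_apply, Pi.smul_apply, Eop, Lop_apply, smul_eq_mul]
    by_cases h : (J i : ℕ) < m i
    · rw [dif_pos h]
      push_cast
      ring
    · rw [dif_neg h]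
      simp
  · rw [if_neg hij, Hop, Eop, Lop_comm i j hij, sub_self]

lemma hHF (i : ι) : Hop i * Fop i - Fop i * Hop i
    = (-((2:ℂ) • Fop i) : Module.End ℂ (V m)) := by
  refine LinearMap.ext fun w => funext fun J => ?_
  rw [LinearMap.sub_apply, Pi.sub_apply, LinearMap.neg_apply, Pi.neg_apply]
  rw [Hop, Fop, Lop_mul_same_apply, Lop_mul_same_apply]
  simp only [LinearMap.smul_apply, Pi.smul_apply, Lop_apply, smul_eq_mul]
  by_cases h : 0 < (J i : ℕ)
  · rw [dif_pos h]
    simp only [Fin.val_mk]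
    have h3 : (((J i : ℕ) - 1 : ℕ) : ℂ) = ((J i : ℕ) : ℂ) - 1 := by push_cast [h]; ring
    rw [h3]
    ring
  · rw [dif_neg h]
    simp

lemma hEF (i : ι) : Eop i * Fop i - Fop i * Eop i = (Hop i : Module.End ℂ (V m)) := by
  refine LinearMap.ext fun w => funext fun J => ?_
  rw [LinearMap.sub_apply, Pi.sub_apply]
  rw [Eop, Fop, Hop, Lop_mul_same_apply, Lop_mul_same_apply, Lop_apply]
  simp only
  by_cases h1 : (J i : ℕ) < m i <;> by_cases h2 : 0 < (J i : ℕ)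
  · rw [dif_pos h1, dif_pos h2]
    simp only
    rw [dif_pos (show 0 < ((⟨(J i : ℕ) + 1, by omega⟩ : Fin (m i + 1)) : ℕ) by simp),
      dif_pos (show ((⟨(J i : ℕ) - 1, by omega⟩ : Fin (m i + 1)) : ℕ) < m i by simp; omega)]
    simp only [Fin.val_mk]
    have e1 : (⟨(J i : ℕ) + 1 - 1, by omega⟩ : Fin (m i + 1)) = J i := by
      apply Fin.ext; simp
    have e2 : (⟨(J i : ℕ) - 1 + 1, by omega⟩ : Fin (m i + 1)) = J i := by
      apply Fin.ext; simp [Nat.sub_add_cancel h2]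
    rw [e1, e2, Function.update_eq_self]
    have h3 : (((J i : ℕ) - 1 : ℕ) : ℂ) = ((J i : ℕ) : ℂ) - 1 := by push_cast [h2]; ring
    rw [h3]
    ring
  · rw [dif_pos h1, dif_neg h2]
    simp only
    rw [dif_pos (show 0 < ((⟨(J i : ℕ) + 1, by omega⟩ : Fin (m i + 1)) : ℕ) by simp)]
    simp only [Fin.val_mk]
    have e1 : (⟨(J i : ℕ) + 1 - 1, by omega⟩ : Fin (m i + 1)) = J i := by
      apply Fin.ext; simp
    rw [e1, Function.update_eq_self]
    have h0 : ((J i : ℕ) : ℂ) = 0 := by rw [show (J i : ℕ) = 0 by omega]; simp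
    rw [h0]
    ring
  · rw [dif_neg h1, dif_pos h2]
    simp only
    rw [dif_pos (show ((⟨(J i : ℕ) - 1, by omega⟩ : Fin (m i + 1)) : ℕ) < m i by simp; omega)]
    simp only [Fin.val_mk]
    have e2 : (⟨(J i : ℕ) - 1 + 1, by omega⟩ : Fin (m i + 1)) = J i := by
      apply Fin.ext; simp [Nat.sub_add_cancel h2]
    rw [e2, Function.update_eq_self]
    have h3 : (((J i : ℕ) - 1 : ℕ) : ℂ) = ((J i : ℕ) : ℂ) - 1 := by push_cast [h2]; ring
    have hm : ((J i : ℕ) : ℂ) = (m i : ℂ) := by norm_cast; omega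
    rw [h3, hm]
    ring
  · rw [dif_neg h1, dif_neg h2]
    have hm : ((m i : ℂ)) = 2 * ((J i : ℕ) : ℂ) := by norm_cast; omega
    rw [hm]
    ring


lemma hHF' (i j : ι) : Hop i * Fop j - Fop j * Hop i
    = (if i = j then -((2:ℂ) • Fop j) else 0 : Module.End ℂ (V m)) := by
  rcases eq_or_ne i j with rfl | hij
  · rw [if_pos rfl]; exact hHF i
  · rw [if_neg hij, Hop, Fop, Lop_comm i j hij, sub_self]

lemma hEF' (i j : ι) : Eop i * Fop j - Fop j * Eop i
    = (if i = j then Hop i else 0 : Module.End ℂ (V m)) := by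
  rcases eq_or_ne i j with rfl | hij
  · rw [if_pos rfl]; exact hEF i
  · rw [if_neg hij, Eop, Fop, Lop_comm i j hij, sub_self]


section Delta
open scoped Classical

noncomputable def delta (J : ∀ i, Fin (m i + 1)) : V m := fun K => if K = J then 1 else 0

lemma delta_self (J : ∀ i, Fin (m i + 1)) : delta (m := m) J J = 1 := if_pos rfl

lemma delta_ne (J K : ∀ i, Fin (m i + 1)) (h : K ≠ J) : delta (m := m) J K = 0 := if_neg h

lemma delta_ne_zero (J : ∀ i, Fin (m i + 1)) : delta (m := m) J ≠ 0 := by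
  intro h
  have := congrFun h J
  rw [delta_self] at this
  simp at this

lemma Hop_delta (i : ι) (J) :
    Hop i (delta (m := m) J) = (((m i : ℂ) - 2 * ((J i : ℕ) : ℂ))) • delta J := by
  funext K
  rw [Hop, Lop_apply]
  simp only [Pi.smul_apply, smul_eq_mul]
  by_cases hK : K = J
  · subst hK; rw [Function.update_eq_self, delta_self]
  · rw [delta_ne _ _ hK]
    by_cases hKJ : Function.update K i (K i) = J
    · rw [Function.update_eq_self] at hKJ; exact absurd hKJ hK
    · rw [Function.update_eq_self, delta_ne _ _ hK]; ring

/-- Key index identity. -/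
lemma upd_eq_iff (K J : ∀ i, Fin (m i + 1)) (i : ι) (hK : 0 < (K i : ℕ)) (hJ : (J i : ℕ) < m i) :
    Function.update K i ⟨(K i : ℕ) - 1, by omega⟩ = J ↔
      K = Function.update J i ⟨(J i : ℕ) + 1, by omega⟩ := by
  constructor
  · intro h
    funext l
    by_cases hl : l = i
    · subst hl
      have h2 := congrFun h l
      rw [Function.update_self] at h2
      have hv : (K l : ℕ) - 1 = (J l : ℕ) := congrArg Fin.val h2
      rw [Function.update_self]
      apply Fin.ext; simp only [Fin.val_mk]; omega
    · rw [Function.update_of_ne hl]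
      have h2 := congrFun h l
      rwa [Function.update_of_ne hl] at h2
  · intro h
    funext l
    by_cases hl : l = i
    · subst hl
      have h2 := congrFun h l
      rw [Function.update_self] at h2
      have hv : (K l : ℕ) = (J l : ℕ) + 1 := congrArg Fin.val h2
      rw [Function.update_self]
      apply Fin.ext; simp only [Fin.val_mk]; omega
    · rw [Function.update_of_ne hl]
      have h2 := congrFun h l
      rwa [Function.update_of_ne hl] at h2

lemma Fop_delta (i : ι) (J) (h : (J i : ℕ) < m i) :
    Fop i (delta (m := m) J) = delta (Function.update J i ⟨(J i : ℕ) + 1, by omega⟩) := by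
  funext K
  rw [Fop, Lop_apply]
  by_cases hK : 0 < (K i : ℕ)
  · rw [dif_pos hK]
    simp only [one_mul]
    unfold delta
    rw [upd_eq_iff K J i hK h]
  · rw [dif_neg hK]
    rw [delta_ne]
    intro hKJ
    have := congrArg Fin.val (congrFun hKJ i)
    rw [Function.update_self] at this
    simp only [Fin.val_mk] at this
    omega
lemma Eop_delta (i : ι) (J) (h : 0 < (J i : ℕ)) :
    Eop i (delta (m := m) J) =
      (((J i : ℕ) : ℂ) * ((m i : ℂ) - ((J i : ℕ) : ℂ) + 1)) •
        delta (Function.update J i ⟨(J i : ℕ) - 1, by omega⟩) := by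
  have hJm : (J i : ℕ) - 1 < m i := by have := (J i).isLt; omega
  funext K
  rw [Eop, Lop_apply]
  simp only [Pi.smul_apply, smul_eq_mul]
  by_cases hK : (K i : ℕ) < m i
  · rw [dif_pos hK]
    have hiff : (Function.update K i (⟨(K i : ℕ) + 1, by omega⟩ : Fin (m i + 1)) = J)
        ↔ K = Function.update J i ⟨(J i : ℕ) - 1, by omega⟩ := by
      rw [show (Function.update K i (⟨(K i : ℕ) + 1, by omega⟩ : Fin (m i + 1)) = J)
          ↔ J = Function.update K i ⟨(K i : ℕ) + 1, by omega⟩ from eq_comm]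
      rw [← upd_eq_iff J K i h hK]
      exact eq_comm
    by_cases hcond : K = Function.update J i ⟨(J i : ℕ) - 1, by omega⟩
    · have h1 : delta (m := m) J (Function.update K i ⟨(K i : ℕ) + 1, by omega⟩) = 1 := by
        rw [delta]; rw [if_pos (hiff.mpr hcond)]
      have h2 : delta (m := m) (Function.update J i ⟨(J i : ℕ) - 1, by omega⟩) K = 1 := by
        rw [delta]; rw [if_pos hcond]
      simp only [h1, h2]
      have hKv : (K i : ℕ) = (J i : ℕ) - 1 := by
        have := congrArg Fin.val (congrFun hcond i)
        rwa [Function.update_self] at this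
      rw [hKv]
      have : (((J i : ℕ) - 1 : ℕ) : ℂ) = ((J i : ℕ) : ℂ) - 1 := by push_cast [h]; ring
      rw [this]
      ring
    · have h1 : delta (m := m) J (Function.update K i ⟨(K i : ℕ) + 1, by omega⟩) = 0 := by
        rw [delta]; rw [if_neg (fun hc => hcond (hiff.mp hc))]
      have h2 : delta (m := m) (Function.update J i ⟨(J i : ℕ) - 1, by omega⟩) K = 0 := by
        rw [delta]; rw [if_neg hcond]
      simp only [h1, h2]
      ring
  · rw [dif_neg hK]
    have h2 : delta (m := m) (Function.update J i ⟨(J i : ℕ) - 1, by omega⟩) K = 0 := by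
      rw [delta, if_neg]
      intro hc
      have := congrArg Fin.val (congrFun hc i)
      rw [Function.update_self] at this
      simp only [Fin.val_mk] at this
      have := (K i).isLt
      omega
    simp only [h2]
    ring

end Delta


section Sums
variable [Fintype ι]

lemma smul_mul_smul_end (x y : ℂ) (A B : Module.End ℂ (V m)) :
    (x • A) * (y • B) = (x * y) • (A * B) := by
  rw [smul_mul_assoc, mul_smul_comm, smul_smul]

/-- Generic commutator-of-sums computation. -/
lemma comm_sum (x y : ι → ℂ) (A B D : ι → Module.End ℂ (V m))
    (h : ∀ i j, A i * B j - B j * A i = if i = j then D i else 0) :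
    (∑ i, x i • A i) * (∑ j, y j • B j) - (∑ j, y j • B j) * (∑ i, x i • A i)
      = ∑ i, (x i * y i) • D i := by
  rw [Finset.sum_mul_sum, Finset.sum_mul_sum, Finset.sum_comm (s := univ) (t := univ)
    (f := fun j i => (y j • B j) * (x i • A i)), ← Finset.sum_sub_distrib]
  have key : ∀ i ∈ (univ : Finset ι), (∑ j, (x i • A i) * (y j • B j))
      - (∑ j, (y j • B j) * (x i • A i)) = (x i * y i) • D i := by
    intro i _
    rw [← Finset.sum_sub_distrib]
    have inner : ∀ j ∈ (univ : Finset ι), (x i • A i) * (y j • B j) - (y j • B j) * (x i • A i)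
        = if i = j then (x i * y i) • D i else 0 := by
      intro j _
      rw [smul_mul_smul_end, smul_mul_smul_end, mul_comm (y j) (x i),
        show (x i * y j) • (A i * B j) - (x i * y j) • (B j * A i)
          = (x i * y j) • (A i * B j - B j * A i) from (smul_sub _ _ _).symm, h i j]
      rcases eq_or_ne i j with rfl | hij
      · rw [if_pos rfl, if_pos rfl]
      · rw [if_neg hij, if_neg hij, smul_zero]
    rw [Finset.sum_congr rfl inner, Finset.sum_ite_eq]
    simp
  rw [Finset.sum_congr rfl key]

variable (Q β : ℂ) (a : ι → ℂ)

noncomputable def XpOp (t : ℕ) : Module.End ℂ (V m) := ∑ i, a i ^ t • Eop i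
noncomputable def XmOp (t : ℕ) : Module.End ℂ (V m) :=
  ∑ i, ((1 - Q * a i) * a i ^ t) • Fop i
noncomputable def JOp (t : ℕ) : Module.End ℂ (V m) :=
  (∑ i, a i ^ t • Hop i) + (Q ^ (-(t : ℤ)) * β) • (1 : Module.End ℂ (V m))

lemma scalar_comm (A B : Module.End ℂ (V m)) (c : ℂ) :
    (A + c • 1) * B - B * (A + c • 1) = A * B - B * A := by
  simp only [add_mul, mul_add, smul_mul_assoc, mul_smul_comm, one_mul, mul_one]
  abel

lemma scalar_comm' (A B : Module.End ℂ (V m)) (c : ℂ) :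
    A * (B + c • 1) - (B + c • 1) * A = A * B - B * A := by
  simp only [add_mul, mul_add, smul_mul_assoc, mul_smul_comm, one_mul, mul_one]
  abel

lemma rel_JJ (s t : ℕ) :
    (JOp (m := m) Q β a s) * JOp Q β a t = JOp Q β a t * JOp Q β a s := by
  rw [← sub_eq_zero, JOp, JOp, scalar_comm, scalar_comm',
    comm_sum _ _ _ _ (fun _ => 0) (fun i j => by simp [hHH i j])]
  simp

lemma rel_JE (s t : ℕ) :
    (JOp (m := m) Q β a s) * XpOp a t - XpOp a t * JOp Q β a s
      = (2 : ℂ) • XpOp a (s + t) := by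
  rw [JOp, scalar_comm, XpOp, XpOp,
    comm_sum _ _ _ _ (fun i => (2:ℂ) • Eop i) (fun i j => by
      rw [hHE i j]
      rcases eq_or_ne i j with rfl | hij
      · rfl
      · rw [if_neg hij, if_neg hij])]
  rw [Finset.smul_sum]
  refine Finset.sum_congr rfl fun i _ => ?_
  rw [smul_smul, smul_smul]
  congr 1
  ring

lemma rel_JF (s t : ℕ) :
    (JOp (m := m) Q β a s) * XmOp Q a t - XmOp Q a t * JOp Q β a s
      = -((2 : ℂ) • XmOp Q a (s + t)) := by
  rw [JOp, scalar_comm, XmOp, XmOp,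
    comm_sum _ _ _ _ (fun i => -((2:ℂ) • Fop i)) (fun i j => by
      rw [hHF' i j]
      rcases eq_or_ne i j with rfl | hij
      · rfl
      · rw [if_neg hij, if_neg hij])]
  rw [Finset.smul_sum, ← Finset.sum_neg_distrib]
  refine Finset.sum_congr rfl fun i _ => ?_
  rw [smul_neg]
  refine congrArg Neg.neg ?_
  rw [smul_smul, smul_smul]
  congr 1
  ring

lemma rel_EF (s t : ℕ) (hβQ : Q = 0 → β = 0) :
    (XpOp (m := m) a t) * XmOp Q a s - XmOp Q a s * XpOp a t
      = JOp Q β a (s + t) - Q • JOp Q β a (s + t + 1) := by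
  have hc : Q ^ (-((s+t : ℕ) : ℤ)) * β - Q * (Q ^ (-((s+t+1 : ℕ) : ℤ)) * β) = 0 := by
    rcases eq_or_ne Q 0 with rfl | hQ
    · rw [hβQ rfl]; ring
    · have h1 : Q * Q ^ (-((s+t+1 : ℕ) : ℤ)) = Q ^ (-((s+t : ℕ) : ℤ)) := by
        rw [show Q * Q ^ (-((s+t+1 : ℕ) : ℤ)) = Q ^ (1 : ℤ) * Q ^ (-((s+t+1 : ℕ) : ℤ)) by
          rw [zpow_one], ← zpow_add₀ hQ]
        congr 1
        push_cast
        ring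
      rw [← mul_assoc, h1, sub_self]
  rw [XpOp, XmOp, comm_sum _ _ _ _ (fun i => Hop i) (fun i j => hEF' i j), JOp, JOp]
  rw [smul_add, add_sub_add_comm]
  have hz : Q • ((Q ^ (-(((s+t+1) : ℕ) : ℤ)) * β) • (1 : Module.End ℂ (V m)))
      = (Q * (Q ^ (-(((s+t+1) : ℕ) : ℤ)) * β)) • (1 : Module.End ℂ (V m)) := smul_smul _ _ _
  rw [hz, show ((Q ^ (-(((s+t) : ℕ)): ℤ) * β) • (1 : Module.End ℂ (V m)))
      - (Q * (Q ^ (-(((s+t+1) : ℕ) : ℤ)) * β)) • (1 : Module.End ℂ (V m))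
      = (Q ^ (-(((s+t) : ℕ) : ℤ)) * β - Q * (Q ^ (-(((s+t+1) : ℕ) : ℤ)) * β))
        • (1 : Module.End ℂ (V m)) from (sub_smul _ _ _).symm, hc, zero_smul, add_zero,
    Finset.smul_sum, ← Finset.sum_sub_distrib]
  refine Finset.sum_congr rfl fun i _ => ?_
  rw [smul_smul, show a i ^ (s+t) • Hop (m := m) i - (Q * a i ^ (s+t+1)) • Hop i
      = (a i ^ (s+t) - Q * a i ^ (s+t+1)) • Hop i from (sub_smul _ _ _).symm]
  congr 1
  ring

lemma rel_EE (s t : ℕ) :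
    (XpOp (m := m) a t) * XpOp a s = XpOp a s * XpOp a t := by
  rw [← sub_eq_zero, XpOp, XpOp,
    comm_sum _ _ _ _ (fun _ => 0) (fun i j => by simp [hEE i j])]
  simp

lemma rel_FF (s t : ℕ) :
    (XmOp (m := m) Q a t) * XmOp Q a s = XmOp Q a s * XmOp Q a t := by
  rw [← sub_eq_zero, XmOp, XmOp,
    comm_sum _ _ _ _ (fun _ => 0) (fun i j => by simp [hFF i j])]
  simp

end Sums


section Simple
open scoped Classical
variable [Fintype ι]

def zIdx : ∀ i : ι, Fin (m i + 1) := fun _ => ⟨0, by omega⟩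

lemma Eop_delta0 (i : ι) (J) (h : (J i : ℕ) = 0) : Eop i (delta (m := m) J) = 0 := by
  funext K
  rw [Eop, Lop_apply]
  by_cases hK : (K i : ℕ) < m i
  · rw [dif_pos hK]
    have h1 : delta (m := m) J (Function.update K i ⟨(K i : ℕ) + 1, by omega⟩) = 0 := by
      refine delta_ne _ _ fun hc => ?_
      have := congrArg Fin.val (congrFun hc i)
      rw [Function.update_self] at this
      simp only [Fin.val_mk] at this
      omega
    simp only [h1, Pi.zero_apply]
    ring
  · rw [dif_neg hK]; simp

lemma Eop_comb (a : ι → ℂ) (ha : Function.Injective a) (i₀ : ι) :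
    ∃ (N : ℕ) (lam : ℕ → ℂ), (∑ t ∈ range N, lam t • XpOp (m := m) a t) = Eop i₀ := by
  set p := Lagrange.interpolate univ a (fun j => if j = i₀ then 1 else 0) with hp
  refine ⟨p.natDegree + 1, p.coeff, ?_⟩
  calc ∑ t ∈ range (p.natDegree + 1), p.coeff t • XpOp (m := m) a t
      = ∑ t ∈ range (p.natDegree + 1), ∑ j, (p.coeff t * a j ^ t) • Eop j := by
        refine Finset.sum_congr rfl fun t _ => ?_
        rw [XpOp, Finset.smul_sum]
        refine Finset.sum_congr rfl fun j _ => ?_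
        rw [smul_smul]
    _ = ∑ j, (∑ t ∈ range (p.natDegree + 1), p.coeff t * a j ^ t) • Eop j := by
        rw [Finset.sum_comm]
        refine Finset.sum_congr rfl fun j _ => ?_
        rw [Finset.sum_smul]
    _ = ∑ j, (Polynomial.eval (a j) p) • Eop j := by
        refine Finset.sum_congr rfl fun j _ => ?_
        rw [Polynomial.eval_eq_sum_range]
    _ = Eop i₀ := by
        have he : ∀ j, Polynomial.eval (a j) p = if j = i₀ then 1 else 0 := fun j =>
          Lagrange.eval_interpolate_at_node _ ha.injOn (mem_univ j)
        rw [Finset.sum_congr rfl (fun j _ => by rw [he j])]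
        simp [ite_smul]

lemma Fop_comb (Q : ℂ) (a : ι → ℂ) (ha : Function.Injective a)
    (hQ : ∀ i, 1 - Q * a i ≠ 0) (i₀ : ι) :
    ∃ (N : ℕ) (lam : ℕ → ℂ), (∑ t ∈ range N, lam t • XmOp (m := m) Q a t) = Fop i₀ := by
  set p := Lagrange.interpolate univ a (fun j => if j = i₀ then (1 - Q * a j)⁻¹ else 0) with hp
  refine ⟨p.natDegree + 1, p.coeff, ?_⟩
  calc ∑ t ∈ range (p.natDegree + 1), p.coeff t • XmOp (m := m) Q a t
      = ∑ t ∈ range (p.natDegree + 1), ∑ j, (p.coeff t * ((1 - Q * a j) * a j ^ t)) • Fop j := by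
        refine Finset.sum_congr rfl fun t _ => ?_
        rw [XmOp, Finset.smul_sum]
        refine Finset.sum_congr rfl fun j _ => ?_
        rw [smul_smul]
    _ = ∑ j, ((1 - Q * a j) * ∑ t ∈ range (p.natDegree + 1), p.coeff t * a j ^ t) • Fop j := by
        rw [Finset.sum_comm]
        refine Finset.sum_congr rfl fun j _ => ?_
        rw [Finset.mul_sum, Finset.sum_smul]
        refine Finset.sum_congr rfl fun t _ => ?_
        congr 1
        ring
    _ = ∑ j, ((1 - Q * a j) * Polynomial.eval (a j) p) • Fop j := by
        refine Finset.sum_congr rfl fun j _ => ?_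
        rw [Polynomial.eval_eq_sum_range]
    _ = Fop i₀ := by
        have he : ∀ j, Polynomial.eval (a j) p = if j = i₀ then (1 - Q * a j)⁻¹ else 0 := fun j =>
          Lagrange.eval_interpolate_at_node _ ha.injOn (mem_univ j)
        rw [Finset.sum_congr rfl (fun j _ => by rw [he j])]
        rw [Finset.sum_congr rfl (fun j _ => by
          rw [show (1 - Q * a j) * (if j = i₀ then (1 - Q * a j)⁻¹ else 0)
            = if j = i₀ then (1 - Q * a j) * (1 - Q * a j)⁻¹ else 0 from by
              rcases eq_or_ne j i₀ with rfl | hj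
              · rw [if_pos rfl, if_pos rfl]
              · rw [if_neg hj, if_neg hj, mul_zero]])]
        rw [Finset.sum_congr rfl (fun j _ => by
          rw [show (if j = i₀ then (1 - Q * a j) * (1 - Q * a j)⁻¹ else 0)
            = if j = i₀ then (1:ℂ) else 0 from by
              rcases eq_or_ne j i₀ with rfl | hj
              · rw [if_pos rfl, if_pos rfl, mul_inv_cancel₀ (hQ j)]
              · rw [if_neg hj, if_neg hj]])]
        simp [ite_smul]

variable {Q β : ℂ} {a : ι → ℂ}

lemma mem_E (W : Submodule ℂ (V m)) (ha : Function.Injective a)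
    (hp : ∀ t, ∀ x ∈ W, XpOp a t x ∈ W) (i : ι) (x : V m) (hx : x ∈ W) : Eop i x ∈ W := by
  obtain ⟨N, lam, hl⟩ := Eop_comb (m := m) a ha i
  have h2 : Eop i x = ∑ t ∈ range N, lam t • XpOp a t x := by
    rw [← hl, LinearMap.sum_apply]
    refine Finset.sum_congr rfl fun t _ => ?_
    rw [LinearMap.smul_apply]
  rw [h2]
  exact Submodule.sum_mem _ fun t _ => W.smul_mem _ (hp t x hx)

lemma mem_F (W : Submodule ℂ (V m)) (ha : Function.Injective a) (hQ : ∀ i, 1 - Q * a i ≠ 0)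
    (hm : ∀ t, ∀ x ∈ W, XmOp Q a t x ∈ W) (i : ι) (x : V m) (hx : x ∈ W) : Fop i x ∈ W := by
  obtain ⟨N, lam, hl⟩ := Fop_comb (m := m) Q a ha hQ i
  have h2 : Fop i x = ∑ t ∈ range N, lam t • XmOp Q a t x := by
    rw [← hl, LinearMap.sum_apply]
    refine Finset.sum_congr rfl fun t _ => ?_
    rw [LinearMap.smul_apply]
  rw [h2]
  exact Submodule.sum_mem _ fun t _ => W.smul_mem _ (hm t x hx)

lemma mem_H (W : Submodule ℂ (V m)) (ha : Function.Injective a) (hQ : ∀ i, 1 - Q * a i ≠ 0)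
    (hp : ∀ t, ∀ x ∈ W, XpOp a t x ∈ W) (hm : ∀ t, ∀ x ∈ W, XmOp Q a t x ∈ W)
    (i : ι) (x : V m) (hx : x ∈ W) : Hop i x ∈ W := by
  have h := LinearMap.congr_fun (hEF (m := m) i) x
  rw [LinearMap.sub_apply, Module.End.mul_apply, Module.End.mul_apply] at h
  rw [← h]
  exact W.sub_mem (mem_E W ha hp i _ (mem_F W ha hQ hm i x hx))
    (mem_F W ha hQ hm i _ (mem_E W ha hp i x hx))


lemma extract (W : Submodule ℂ (V m)) (hH : ∀ i, ∀ x ∈ W, Hop i x ∈ W) :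
    ∀ (N : ℕ) (w : V m), w ∈ W → ((univ : Finset (∀ i, Fin (m i + 1))).filter
      (fun K => w K ≠ 0)).card ≤ N → ∀ J, w J • delta J ∈ W := by
  intro N
  induction N with
  | zero =>
    intro w hw hcard J
    have : ∀ K, w K = 0 := by
      intro K
      by_contra hK
      have : K ∈ (univ : Finset (∀ i, Fin (m i + 1))).filter (fun K => w K ≠ 0) := by
        simp [hK]
      have := Finset.card_pos.mpr ⟨K, this⟩
      omega
    rw [this J, zero_smul]
    exact W.zero_mem
  | succ N ih =>
    intro w hw hcard J
    by_cases hex : ∃ K, K ≠ J ∧ w K ≠ 0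
    · obtain ⟨K, hKJ, hwK⟩ := hex
      have : ∃ i, K i ≠ J i := by
        by_contra hc
        push_neg at hc
        exact hKJ (funext hc)
      obtain ⟨i, hi⟩ := this
      set w' : V m := Hop i w - ((m i : ℂ) - 2 * ((K i : ℕ) : ℂ)) • w with hw'def
      have hw'W : w' ∈ W := W.sub_mem (hH i w hw) (W.smul_mem _ hw)
      have hw'val : ∀ L, w' L = (2 * ((K i : ℕ) : ℂ) - 2 * ((L i : ℕ) : ℂ)) * w L := by
        intro L
        rw [hw'def]
        simp only [Pi.sub_apply, Pi.smul_apply, smul_eq_mul, Hop_apply]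
        ring
      have hsub : ((univ : Finset (∀ i, Fin (m i + 1))).filter (fun L => w' L ≠ 0))
          ⊆ ((univ : Finset (∀ i, Fin (m i + 1))).filter (fun L => w L ≠ 0)).erase K := by
        intro L hL
        rw [Finset.mem_filter] at hL
        rw [Finset.mem_erase, Finset.mem_filter]
        have hwL : w L ≠ 0 := by
          intro h0
          exact hL.2 (by rw [hw'val L, h0, mul_zero])
        refine ⟨?_, mem_univ L, hwL⟩
        intro hLK
        subst hLK
        exact hL.2 (by rw [hw'val L]; ring)
      have hKmem : K ∈ ((univ : Finset (∀ i, Fin (m i + 1))).filter (fun L => w L ≠ 0)) := by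
        simp [hwK]
      have hcard' : ((univ : Finset (∀ i, Fin (m i + 1))).filter (fun L => w' L ≠ 0)).card ≤ N := by
        have h1 := Finset.card_le_card hsub
        rw [Finset.card_erase_of_mem hKmem] at h1
        omega
      have hmem := ih w' hw'W hcard' J
      rw [hw'val J] at hmem
      have hα : (2 * ((K i : ℕ) : ℂ) - 2 * ((J i : ℕ) : ℂ)) ≠ 0 := by
        have : (K i : ℕ) ≠ (J i : ℕ) := fun hc => hi (Fin.ext hc)
        have : ((K i : ℕ) : ℂ) ≠ ((J i : ℕ) : ℂ) := fun hc => this (Nat.cast_injective hc)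
        intro hc
        apply this
        have : 2 * (((K i : ℕ) : ℂ) - ((J i : ℕ) : ℂ)) = 0 := by rw [← hc]; ring
        have h2 : (((K i : ℕ) : ℂ) - ((J i : ℕ) : ℂ)) = 0 := by
          rcases mul_eq_zero.mp this with h | h
          · norm_num at h
          · exact h
        linear_combination h2
      have := W.smul_mem (2 * ((K i : ℕ) : ℂ) - 2 * ((J i : ℕ) : ℂ))⁻¹ hmem
      rwa [← mul_smul, ← mul_assoc, inv_mul_cancel₀ hα, one_mul] at this
    · push_neg at hex
      have : w = w J • delta J := by
        funext L
        by_cases hL : L = J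
        · subst hL; simp [delta_self]
        · rw [hex L hL]
          simp [delta_ne _ _ hL]
      rw [← this]
      exact hw

lemma descend (W : Submodule ℂ (V m)) (hE : ∀ i, ∀ x ∈ W, Eop i x ∈ W) :
    ∀ (N : ℕ) (J), (∑ i, (J i : ℕ)) = N → delta J ∈ W → delta (zIdx (m := m)) ∈ W := by
  intro N
  induction N using Nat.strong_induction_on with
  | _ N ih =>
    intro J hsum hJ
    by_cases h0 : ∀ i, (J i : ℕ) = 0
    · have : J = zIdx := funext fun i => Fin.ext (h0 i)
      rwa [← this]
    · push_neg at h0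
      obtain ⟨i, hi⟩ := h0
      have hipos : 0 < (J i : ℕ) := Nat.pos_of_ne_zero hi
      have hmem := hE i _ hJ
      rw [Eop_delta i J hipos] at hmem
      have hc : ((J i : ℕ) : ℂ) * ((m i : ℂ) - ((J i : ℕ) : ℂ) + 1) ≠ 0 := by
        have hle : (J i : ℕ) ≤ m i := by have := (J i).isLt; omega
        have h1 : ((J i : ℕ) : ℂ) ≠ 0 := Nat.cast_ne_zero.mpr hi
        have h2 : (m i : ℂ) - ((J i : ℕ) : ℂ) + 1 ≠ 0 := by
          have he : ((m i - (J i : ℕ) + 1 : ℕ) : ℂ) = (m i : ℂ) - ((J i : ℕ) : ℂ) + 1 := by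
            push_cast [hle]
            ring
          rw [← he]
          exact Nat.cast_ne_zero.mpr (by omega)
        exact mul_ne_zero h1 h2
      have hdm : delta (Function.update J i ⟨(J i : ℕ) - 1, by omega⟩) ∈ W := by
        have := W.smul_mem (((J i : ℕ) : ℂ) * ((m i : ℂ) - ((J i : ℕ) : ℂ) + 1))⁻¹ hmem
        rwa [smul_smul, inv_mul_cancel₀ hc, one_smul] at this
      set J' := Function.update J i (⟨(J i : ℕ) - 1, by omega⟩ : Fin (m i + 1)) with hJ'
      have hfun : (fun l => ((J' l : ℕ))) = Function.update (fun l => (J l : ℕ)) i ((J i : ℕ) - 1) := by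
        funext l
        by_cases hl : l = i
        · subst hl; rw [hJ', Function.update_self, Function.update_self]
        · rw [hJ', Function.update_of_ne hl, Function.update_of_ne hl]
      have hsum' : (∑ l, (J' l : ℕ)) < N := by
        have he : (∑ l, (J' l : ℕ)) = ∑ l, Function.update (fun l => (J l : ℕ)) i ((J i : ℕ) - 1) l := by
          rw [← hfun]
        rw [he, Finset.sum_update_of_mem (mem_univ i)]
        rw [← hsum, ← Finset.add_sum_erase univ _ (mem_univ i)]
        have : ∑ l ∈ univ.erase i, (J l : ℕ) = ∑ l ∈ univ \ {i}, (J l : ℕ) := by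
          rw [Finset.erase_eq]
        omega
      exact ih _ hsum' J' rfl hdm

lemma ascend (W : Submodule ℂ (V m)) (hF : ∀ i, ∀ x ∈ W, Fop i x ∈ W)
    (h0 : delta (zIdx (m := m)) ∈ W) :
    ∀ (N : ℕ) (K), (∑ i, (K i : ℕ)) = N → delta K ∈ W := by
  intro N
  induction N using Nat.strong_induction_on with
  | _ N ih =>
    intro K hsum
    by_cases hK0 : ∀ i, (K i : ℕ) = 0
    · have : K = zIdx := funext fun i => Fin.ext (hK0 i)
      rwa [this]
    · push_neg at hK0
      obtain ⟨i, hi⟩ := hK0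
      have hipos : 0 < (K i : ℕ) := Nat.pos_of_ne_zero hi
      set K' := Function.update K i (⟨(K i : ℕ) - 1, by omega⟩ : Fin (m i + 1)) with hK'
      have hfun : (fun l => ((K' l : ℕ))) = Function.update (fun l => (K l : ℕ)) i ((K i : ℕ) - 1) := by
        funext l
        by_cases hl : l = i
        · subst hl; rw [hK', Function.update_self, Function.update_self]
        · rw [hK', Function.update_of_ne hl, Function.update_of_ne hl]
      have hsum' : (∑ l, (K' l : ℕ)) < N := by
        have he : (∑ l, (K' l : ℕ)) = ∑ l, Function.update (fun l => (K l : ℕ)) i ((K i : ℕ) - 1) l := by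
          rw [← hfun]
        rw [he, Finset.sum_update_of_mem (mem_univ i)]
        rw [← hsum, ← Finset.add_sum_erase univ _ (mem_univ i)]
        have : ∑ l ∈ univ.erase i, (K l : ℕ) = ∑ l ∈ univ \ {i}, (K l : ℕ) := by
          rw [Finset.erase_eq]
        omega
      have hK'W : delta K' ∈ W := ih _ hsum' K' rfl
      have hK'i : (K' i : ℕ) = (K i : ℕ) - 1 := by
        rw [hK', Function.update_self]
      have hK'lt : (K' i : ℕ) < m i := by
        have := (K i).isLt
        omega
      have hmem := hF i _ hK'W
      rw [Fop_delta i K' hK'lt] at hmem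
      have hupd : Function.update K' i (⟨(K' i : ℕ) + 1, by omega⟩ : Fin (m i + 1)) = K := by
        funext l
        by_cases hl : l = i
        · subst hl
          rw [Function.update_self]
          apply Fin.ext
          simp only [Fin.val_mk]
          omega
        · rw [Function.update_of_ne hl, hK', Function.update_of_ne hl]
      rwa [hupd] at hmem

lemma eq_sum_deltas (x : V m) : x = ∑ K : (∀ i, Fin (m i + 1)), x K • delta K := by
  funext L
  rw [Finset.sum_apply]
  have : ∀ K ∈ (univ : Finset (∀ i, Fin (m i + 1))), (x K • delta K) L
      = if L = K then x K else 0 := by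
    intro K _
    rcases eq_or_ne L K with rfl | hLK
    · simp [delta_self]
    · simp [delta_ne _ _ hLK, hLK]
  rw [Finset.sum_congr rfl this]
  simp

lemma simpleW (ha : Function.Injective a) (hQ : ∀ i, 1 - Q * a i ≠ 0)
    (W : Submodule ℂ (V m)) (hp : ∀ t, ∀ x ∈ W, XpOp a t x ∈ W)
    (hm : ∀ t, ∀ x ∈ W, XmOp Q a t x ∈ W) : W = ⊥ ∨ W = ⊤ := by
  by_cases hbot : W = ⊥
  · exact Or.inl hbot
  right
  obtain ⟨w, hwW, hw0⟩ := Submodule.exists_mem_ne_zero_of_ne_bot hbot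
  have hH : ∀ i, ∀ x ∈ W, Hop i x ∈ W := fun i x hx => mem_H W ha hQ hp hm i x hx
  have hE : ∀ i, ∀ x ∈ W, Eop i x ∈ W := fun i x hx => mem_E W ha hp i x hx
  have hF : ∀ i, ∀ x ∈ W, Fop i x ∈ W := fun i x hx => mem_F W ha hQ hm i x hx
  obtain ⟨J0, hJ0⟩ : ∃ J0, w J0 ≠ 0 := by
    by_contra hc
    push_neg at hc
    exact hw0 (funext hc)
  have hdJ0 : delta J0 ∈ W := by
    have := extract W hH _ w hwW le_rfl J0
    have h2 := W.smul_mem (w J0)⁻¹ this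
    rwa [smul_smul, inv_mul_cancel₀ hJ0, one_smul] at h2
  have hz : delta (zIdx (m := m)) ∈ W := descend W hE _ J0 rfl hdJ0
  have hall : ∀ K, delta K ∈ W := fun K => ascend W hF hz _ K rfl
  rw [Submodule.eq_top_iff']
  intro x
  rw [eq_sum_deltas (m := m) x]
  exact Submodule.sum_mem _ fun K _ => W.smul_mem _ (hall K)


lemma Xp_delta_z (a : ι → ℂ) (t : ℕ) :
    XpOp (m := m) a t (delta (zIdx (m := m))) = 0 := by
  rw [XpOp, LinearMap.sum_apply]
  refine Finset.sum_eq_zero fun i _ => ?_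
  rw [LinearMap.smul_apply, Eop_delta0 i _ rfl, smul_zero]

lemma J_delta_z (Q β : ℂ) (a : ι → ℂ) (t : ℕ) :
    JOp (m := m) Q β a t (delta (zIdx (m := m))) =
      ((∑ i, (m i : ℂ) * a i ^ t) + Q ^ (-(t : ℤ)) * β) • delta (zIdx (m := m)) := by
  rw [JOp, LinearMap.add_apply, LinearMap.sum_apply, LinearMap.smul_apply,
    Module.End.one_apply]
  have hterm : ∀ i ∈ (univ : Finset ι), (a i ^ t • Hop (m := m) i) (delta (zIdx (m := m)))
      = ((m i : ℂ) * a i ^ t) • delta (zIdx (m := m)) := by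
    intro i _
    rw [LinearMap.smul_apply, Hop_delta, smul_smul]
    have : ((zIdx (m := m) i : ℕ) : ℂ) = 0 := by norm_num [zIdx]
    rw [this]
    congr 1
    ring
  rw [Finset.sum_congr rfl hterm, ← Finset.sum_smul, ← add_smul]

end Simple
end Stmt11Aux


open Stmt11Aux

theorem stmt11 (Q : ℂ) (n : ℕ) (γ : Fin n → ℂ) (hγ : ∀ k, Q * γ k ≠ 1) (β : ℂ)
    (hβ : Q = 0 → β = 0) :
    ∃ (V : Type) (_ : AddCommGroup V) (_ : Module ℂ V),
      FiniteDimensional ℂ V ∧ Nontrivial V ∧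
      ∃ Xp Xm J : ℕ → Module.End ℂ V,
        (∀ s t, J s * J t = J t * J s) ∧
        (∀ s t, J s * Xp t - Xp t * J s = (2 : ℂ) • Xp (s + t)) ∧
        (∀ s t, J s * Xm t - Xm t * J s = -((2 : ℂ) • Xm (s + t))) ∧
        (∀ s t, Xp t * Xm s - Xm s * Xp t = J (s + t) - Q • J (s + t + 1)) ∧
        (∀ s t, Xp t * Xp s = Xp s * Xp t) ∧
        (∀ s t, Xm t * Xm s = Xm s * Xm t) ∧
        (∀ W : Submodule ℂ V,
          (∀ t, ∀ x ∈ W, Xp t x ∈ W) → (∀ t, ∀ x ∈ W, Xm t x ∈ W) →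
            (∀ t, ∀ x ∈ W, J t x ∈ W) → W = ⊥ ∨ W = ⊤) ∧
        ∃ v : V, v ≠ 0 ∧ (∀ t, Xp t v = 0) ∧
          J 0 v = ((n : ℂ) + β) • v ∧
          (∀ t, 0 < t →
            (Q = 0 → J t v = (∑ k, γ k ^ t) • v) ∧
            (Q ≠ 0 → J t v = ((∑ k, γ k ^ t) + Q ^ (-(t : ℤ)) * β) • v)) := by
  classical
  set s : Finset ℂ := Finset.image γ Finset.univ with hs
  let ι : Type := {b : ℂ // b ∈ s}
  let m : ι → ℕ := fun i => (Finset.univ.filter fun k => γ k = (i : ℂ)).card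
  let a : ι → ℂ := fun i => (i : ℂ)
  have ha : Function.Injective a := Subtype.coe_injective
  have hQa : ∀ i, 1 - Q * a i ≠ 0 := by
    intro i
    obtain ⟨k, _, hk⟩ := Finset.mem_image.mp i.2
    rw [sub_ne_zero]
    intro hc
    exact hγ k (by rw [hk]; exact hc.symm)
  have hsum : ∀ t : ℕ, (∑ i : ι, (m i : ℂ) * a i ^ t) = ∑ k, γ k ^ t := by
    intro t
    rw [Finset.sum_comp (fun b : ℂ => b ^ t) γ]
    rw [← Finset.sum_coe_sort s (fun b => (Finset.univ.filter fun k => γ k = b).card • b ^ t)]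
    refine Finset.sum_congr rfl fun i _ => ?_
    rw [nsmul_eq_mul]
  have hn : (∑ i : ι, (m i : ℂ)) = (n : ℂ) := by
    have h0 := hsum 0
    simp only [pow_zero, mul_one] at h0
    rw [h0]
    simp
  refine ⟨V m, inferInstance, inferInstance, inferInstance, ⟨delta (zIdx (m := m)), 0,
      delta_ne_zero _⟩, XpOp a, XmOp Q a, JOp Q β a,
    fun s t => rel_JJ Q β a s t,
    fun s t => rel_JE Q β a s t,
    fun s t => rel_JF Q β a s t,
    fun s t => rel_EF Q β a s t hβ,
    fun s t => rel_EE a s t,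
    fun s t => rel_FF Q a s t,
    fun W hp hm _ => simpleW ha hQa W hp hm,
    delta (zIdx (m := m)), delta_ne_zero _,
    fun t => Xp_delta_z a t, ?_, ?_⟩
  · rw [J_delta_z]
    congr 1
    simp only [pow_zero, mul_one]
    rw [hn]
    norm_num
  · intro t ht
    constructor
    · intro hQ0
      rw [J_delta_z]
      congr 1
      rw [hβ hQ0, mul_zero, add_zero, hsum t]
    · intro hQ0
      rw [J_delta_z]
      congr 1
      rw [hsum t]
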